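/- Let φ : R_D → R_C be a neural ring homomorphism with key vector V ∈ ({1,...,n} ∪ {0,u})^m. Then the corresponding code map q_φ : C → D sends c to the codeword d with d_j = c_i if V_j = i, d_j = 0 if V_j = 0, and d_j = 1 if V_j = u. -/

import Mathlib

/-- The pullback of a code map `q : C → D`: the ring homomorphism
`q* : F_2^D → F_2^C`, `q*(f) = f ∘ q`. -/
def pullbackHom {n m : ℕ} {C : Set (Fin n → ZMod 2)} {D : Set (Fin m → ZMod 2)}
    (q : ↥C → ↥D) : (↥D → ZMod 2) →+* (↥C → ZMod 2) :=
  Pi.ringHom fun c => Pi.evalRingHom (fun _ => ZMod 2) (q c)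

/-- The `i`-th coordinate function of the neural ring `F_2^C`. -/
def coordFn {n : ℕ} (C : Set (Fin n → ZMod 2)) (i : Fin n) : ↥C → ZMod 2 :=
  fun c => (c : Fin n → ZMod 2) i

/-- A ring homomorphism `φ : R_D → R_C` between neural rings is *neural* if it sends each
coordinate function of `R_D` to a coordinate function of `R_C`, or to `0`, or to `1`. -/
def IsNeural {n m : ℕ} {C : Set (Fin n → ZMod 2)} {D : Set (Fin m → ZMod 2)}
    (φ : (↥D → ZMod 2) →+* (↥C → ZMod 2)) : Prop :=
  ∀ j : Fin m,
    (∃ i : Fin n, φ (coordFn D j) = coordFn C i) ∨ φ (coordFn D j) = 0 ∨ φ (coordFn D j) = 1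

/-- A key vector entry is either a coordinate index `i` (`Sum.inl i`) or a constant bit
(`Sum.inr 0` for `0`, `Sum.inr 1` for `u`, i.e. `1`). A code map `q : C → D` is
*described by* a key vector `V` if `q(c)_j = c_i` when `V_j = i`, and `q(c)_j = b` when
`V_j` is the constant `b`. -/
def DescribedBy {n m : ℕ} {C : Set (Fin n → ZMod 2)} {D : Set (Fin m → ZMod 2)}
    (q : ↥C → ↥D) (V : Fin m → (Fin n ⊕ ZMod 2)) : Prop :=
  ∀ (c : ↥C) (j : Fin m),
    (q c : Fin m → ZMod 2) j = Sum.elim (fun i => (c : Fin n → ZMod 2) i) id (V j)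

/-- A neural ring homomorphism `φ : R_D → R_C` has key vector `V` when `φ(x_j) = y_i` if
`V_j = i`, and `φ(x_j)` is the constant `b` if `V_j` is the constant `b`. -/
def HasKeyVector {n m : ℕ} {C : Set (Fin n → ZMod 2)} {D : Set (Fin m → ZMod 2)}
    (φ : (↥D → ZMod 2) →+* (↥C → ZMod 2)) (V : Fin m → (Fin n ⊕ ZMod 2)) : Prop :=
  ∀ j : Fin m,
    φ (coordFn D j) = Sum.elim (fun i => coordFn C i) (fun b => Function.const ↥C b) (V j)

/-- If `φ : R_D → R_C` is a neural ring homomorphism with key vector `V`, then the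
corresponding code map `q_φ : C → D` (the one with `q_φ* = φ`) is described by `V`. -/
theorem codeMap_of_keyVector {n m : ℕ} {C : Set (Fin n → ZMod 2)} {D : Set (Fin m → ZMod 2)}
    (φ : (↥D → ZMod 2) →+* (↥C → ZMod 2)) (V : Fin m → (Fin n ⊕ ZMod 2))
    (hφ : IsNeural φ) (hV : HasKeyVector φ V) (q : ↥C → ↥D) (hq : pullbackHom q = φ) :
    DescribedBy q V := by
  intro c j
  have h := congrFun (hV j) c
  rw [← hq] at h
  change (q c : Fin m → ZMod 2) j = _ at h
  cases hVj : V j with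
  | inl i => simpa [pullbackHom, coordFn, hVj] using h
  | inr b => simpa [pullbackHom, coordFn, hVj, Function.const] using h
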